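/- If h* solves the Water-Filling Problem (β(h*) = b), then the tuple θ_i = θ_i(h*), i = 1,…,k, satisfies all four constraints of the Constrained Allocation Problem: Σθ_i = b; θ₁ ≤ ⋯ ≤ θ_k; s'(θ_j)/s'(θ_i) = c_j/c_i whenever i < j and θ_j ≥ θ_i > 0; and s'(θ_j)/s'(0) ≥ c_j/c_i whenever i < j and θ_j > θ_i = 0. -/

import Mathlib

open Set Finset

/-- If `h*` solves the Water-Filling Problem (`β(h*) = b`), then the tuple
`θ_i = θ_i(h*)` satisfies all four constraints of the Constrained Allocation Problem. -/
theorem stmt_4 (B b : ℝ) (hB : 0 < B) (hb : 0 < b) (hbB : b ≤ B)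
    (s' : ℝ → ℝ)
    (hcont : ContinuousOn s' (Icc (0:ℝ) B))
    (hpos : ∀ θ ∈ Icc (0:ℝ) B, 0 < s' θ)
    (hanti : StrictAntiOn s' (Icc (0:ℝ) B))
    (sInv : ℝ → ℝ)
    (hInv₁ : ∀ y ∈ Icc (s' b) (s' 0), s' (sInv y) = y ∧ sInv y ∈ Icc (0:ℝ) b)
    (hInv₂ : ∀ θ ∈ Icc (0:ℝ) b, sInv (s' θ) = θ)
    (k : ℕ) (hk : 2 ≤ k)
    (c : Fin k → ℝ) (hcpos : ∀ i, 0 < c i) (hcanti : Antitone c)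
    (hmin hmax : ℝ) (hminmax : hmin ≤ hmax)
    (g : ℝ → ℝ)
    (hgcont : ContinuousOn g (Icc hmin hmax))
    (hganti : StrictAntiOn g (Icc hmin hmax))
    (hgmax : g hmax ≤ s' b / c ⟨0, by omega⟩)
    (hgmin : g hmin ≥ s' 0 / c ⟨k - 1, by omega⟩)
    (θfun : Fin k → ℝ → ℝ)
    (hθfun : ∀ i h, θfun i h =
      if s' 0 ≤ c i * g h then 0
      else if c i * g h ≤ s' b then b
      else sInv (c i * g h))
    (hstar : ℝ) (hstarmem : hstar ∈ Icc hmin hmax)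
    (hWFP : ∑ i, θfun i hstar = b) :
    (∑ i, θfun i hstar = b) ∧
    (Monotone fun i => θfun i hstar) ∧
    (∀ i j : Fin k, i < j → 0 < θfun i hstar → θfun i hstar ≤ θfun j hstar →
      s' (θfun j hstar) / s' (θfun i hstar) = c j / c i) ∧
    (∀ i j : Fin k, i < j → θfun i hstar = 0 → 0 < θfun j hstar →
      s' (θfun j hstar) / s' 0 ≥ c j / c i) := by

  have h0B : (0:ℝ) ∈ Icc (0:ℝ) B := ⟨le_refl _, hB.le⟩
  have hbBmem : b ∈ Icc (0:ℝ) B := ⟨hb.le, hbB⟩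
  have hs0 : 0 < s' 0 := hpos 0 h0B
  have hsb : 0 < s' b := hpos b hbBmem
  have hsb0 : s' b < s' 0 := hanti h0B hbBmem hb
  set G := g hstar with hGdef
  have hGpos : 0 < G := by
    by_contra hle
    push_neg at hle
    have hall : ∀ i : Fin k, θfun i hstar = b := by
      intro i
      rw [hθfun]
      have h1 : ¬ s' 0 ≤ c i * G := by nlinarith [hcpos i]
      have h2 : c i * G ≤ s' b := by nlinarith [hcpos i]
      rw [if_neg h1, if_pos h2]
    rw [Finset.sum_congr rfl (fun i _ => hall i)] at hWFP
    simp [Finset.sum_const, Finset.card_univ, nsmul_eq_mul] at hWFP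
    have hk2 : (2:ℝ) ≤ (k:ℝ) := by exact_mod_cast hk
    nlinarith
  have hθmem : ∀ i : Fin k, θfun i hstar ∈ Icc (0:ℝ) b := by
    intro i
    rw [hθfun]
    split_ifs with h1 h2
    · exact ⟨le_refl _, hb.le⟩
    · exact ⟨hb.le, le_refl _⟩
    · exact (hInv₁ _ ⟨(not_le.mp h2).le, (not_le.mp h1).le⟩).2
  have hsInvAnti : ∀ x ∈ Icc (s' b) (s' 0), ∀ y ∈ Icc (s' b) (s' 0), x ≤ y → sInv y ≤ sInv x := by
    intro x hx y hy hxy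
    by_contra hcon
    push_neg at hcon
    have hmx := hInv₁ x hx
    have hmy := hInv₁ y hy
    have hlt : s' (sInv y) < s' (sInv x) :=
      hanti ⟨hmx.2.1, hmx.2.2.trans hbB⟩ ⟨hmy.2.1, hmy.2.2.trans hbB⟩ hcon
    rw [hmx.1, hmy.1] at hlt
    linarith
  have hmono : Monotone fun i => θfun i hstar := by
    intro i j hij
    have hx : c j * G ≤ c i * G := mul_le_mul_of_nonneg_right (hcanti hij) hGpos.le
    simp only [hθfun]
    by_cases h1 : s' 0 ≤ c i * G
    · rw [if_pos h1]
      have h := (hθmem j).1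
      rw [hθfun] at h
      exact h
    · rw [if_neg h1]
      have h3 : ¬ s' 0 ≤ c j * G := fun h => h1 (le_trans h hx)
      rw [if_neg h3]
      by_cases h2 : c i * G ≤ s' b
      · rw [if_pos h2, if_pos (le_trans hx h2)]
      · rw [if_neg h2]
        by_cases h4 : c j * G ≤ s' b
        · rw [if_pos h4]
          exact (hInv₁ _ ⟨(not_le.mp h2).le, (not_le.mp h1).le⟩).2.2
        · rw [if_neg h4]
          exact hsInvAnti _ ⟨(not_le.mp h4).le, (not_le.mp h3).le⟩ _
            ⟨(not_le.mp h2).le, (not_le.mp h1).le⟩ hx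
  have hpair : ∀ i j : Fin k, i ≠ j → θfun i hstar + θfun j hstar ≤ b := by
    intro i j hij
    have hsub : (({i, j} : Finset (Fin k)) : Finset (Fin k)) ⊆ Finset.univ := Finset.subset_univ _
    have hle : ∑ x ∈ ({i, j} : Finset (Fin k)), θfun x hstar ≤ ∑ x, θfun x hstar :=
      Finset.sum_le_sum_of_subset_of_nonneg hsub (fun x _ _ => (hθmem x).1)
    rw [Finset.sum_pair hij, hWFP] at hle
    exact hle
  refine ⟨hWFP, hmono, ?_, ?_⟩
  · intro i j hij hposi hle
    have hpij := hpair i j (ne_of_lt hij)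
    have hjpos : 0 < θfun j hstar := lt_of_lt_of_le hposi hle
    have hi1 : ¬ s' 0 ≤ c i * G := by
      intro h1
      rw [hθfun, if_pos h1] at hposi
      linarith
    have hi2 : ¬ c i * G ≤ s' b := by
      intro h2
      have hieqb : θfun i hstar = b := by rw [hθfun, if_neg hi1, if_pos h2]
      rw [hieqb] at hpij hle
      linarith
    have hieq : θfun i hstar = sInv (c i * G) := by rw [hθfun, if_neg hi1, if_neg hi2]
    have hival := hInv₁ (c i * G) ⟨(not_le.mp hi2).le, (not_le.mp hi1).le⟩
    have hj1 : ¬ s' 0 ≤ c j * G := by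
      intro h1
      rw [hθfun, if_pos h1] at hjpos
      linarith
    have hj2 : ¬ c j * G ≤ s' b := by
      intro h2
      have hjeqb : θfun j hstar = b := by rw [hθfun, if_neg hj1, if_pos h2]
      rw [hjeqb] at hpij
      linarith
    have hjeq : θfun j hstar = sInv (c j * G) := by rw [hθfun, if_neg hj1, if_neg hj2]
    have hjval := hInv₁ (c j * G) ⟨(not_le.mp hj2).le, (not_le.mp hj1).le⟩
    rw [hieq, hjeq, hival.1, hjval.1]
    exact mul_div_mul_right _ _ (ne_of_gt hGpos)
  · intro i j hij hzero hjpos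
    have hi : s' 0 ≤ c i * G := by
      by_contra h1
      rw [hθfun, if_neg h1] at hzero
      by_cases h2 : c i * G ≤ s' b
      · rw [if_pos h2] at hzero
        linarith
      · rw [if_neg h2] at hzero
        have := (hInv₁ _ ⟨(not_le.mp h2).le, (not_le.mp h1).le⟩).1
        rw [hzero] at this
        exact h1 this.le
    have hj1 : ¬ s' 0 ≤ c j * G := by
      intro h1
      rw [hθfun, if_pos h1] at hjpos
      linarith
    by_cases h2 : c j * G ≤ s' b
    · have hjeq : θfun j hstar = b := by rw [hθfun, if_neg hj1, if_pos h2]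
      rw [hjeq, ge_iff_le, div_le_div_iff₀ (hcpos i) hs0]
      nlinarith [hcpos i, hcpos j, mul_le_mul_of_nonneg_left h2 (hcpos i).le,
        mul_le_mul_of_nonneg_left hi (hcpos j).le]
    · have hjeq : θfun j hstar = sInv (c j * G) := by rw [hθfun, if_neg hj1, if_neg h2]
      have hjval := hInv₁ (c j * G) ⟨(not_le.mp h2).le, (not_le.mp hj1).le⟩
      rw [hjeq, hjval.1, ge_iff_le, div_le_div_iff₀ (hcpos i) hs0]
      nlinarith [hcpos j, mul_le_mul_of_nonneg_left hi (hcpos j).le]
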